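/- Let G = (V, w) be a weighted graph and ℒ a maximal cross-free family of cuts of G such that every cut in ℒ has the same weight c. Then the minimum cut weight of G equals c. -/
import Mathlib


open Finset

/-- Two finite sets overlap if their intersection and both differences are nonempty. -/
def overlap {V : Type*} [DecidableEq V] (X Y : Finset V) : Prop :=
  (X ∩ Y).Nonempty ∧ (X \ Y).Nonempty ∧ (Y \ X).Nonempty

/-- Two shores cross if all four corner sets are nonempty. -/
def crossing {V : Type*} [DecidableEq V] [Fintype V] (X Y : Finset V) : Prop :=
  (X ∩ Y).Nonempty ∧ (X \ Y).Nonempty ∧ (Y \ X).Nonempty ∧ (Xᶜ ∩ Yᶜ).Nonempty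

/-- X is the shore of a cut: nonempty and proper. -/
def isCutShore {V : Type*} [Fintype V] (X : Finset V) : Prop :=
  X.Nonempty ∧ X ≠ Finset.univ

/-- The weight of the cut Δ(X) in the weighted graph with (symmetric) weights w. -/
noncomputable def cutWeight {V : Type*} [DecidableEq V] [Fintype V]
    (w : V → V → ℝ) (X : Finset V) : ℝ :=
  (1/2) * ∑ p : V × V,
    if (p.1 ∈ X ∧ p.2 ∉ X) ∨ (p.2 ∈ X ∧ p.1 ∉ X) then w p.1 p.2 else 0

/-- Δ(X) is a minimum cut. -/
def isMinCut {V : Type*} [DecidableEq V] [Fintype V] (w : V → V → ℝ) (X : Finset V) : Prop :=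
  isCutShore X ∧ ∀ Y : Finset V, isCutShore Y → cutWeight w X ≤ cutWeight w Y

/-- The characteristic vector of the cut Δ(X) among the edges (pairs of positive weight). -/
noncomputable def cutVec {V : Type*} [DecidableEq V] [Fintype V]
    (w : V → V → ℝ) (X : Finset V) : V × V → ℝ :=
  fun p => if (((p.1 ∈ X ∧ p.2 ∉ X) ∨ (p.2 ∈ X ∧ p.1 ∉ X)) ∧ 0 < w p.1 p.2) then 1 else 0

section Aux

variable {V : Type*} [DecidableEq V] [Fintype V]

lemma crossing_iff (X Y : Finset V) :
    crossing X Y ↔ (∃ a, a ∈ X ∧ a ∈ Y) ∧ (∃ b, b ∈ X ∧ b ∉ Y) ∧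
      (∃ d, d ∈ Y ∧ d ∉ X) ∧ (∃ e, e ∉ X ∧ e ∉ Y) := by
  simp [crossing, Finset.Nonempty]

lemma crossing_compl_left (X Y : Finset V) : crossing Xᶜ Y ↔ crossing X Y := by
  rw [crossing_iff, crossing_iff]
  simp only [Finset.mem_compl, not_not]
  tauto

lemma crossing_compl_right (X Y : Finset V) : crossing X Yᶜ ↔ crossing X Y := by
  rw [crossing_iff, crossing_iff]
  simp only [Finset.mem_compl, not_not]
  tauto

lemma not_crossing_inter_right (X Y : Finset V) : ¬ crossing (X ∩ Y) Y := by
  rw [crossing_iff]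
  rintro ⟨-, ⟨b, hb, hbY⟩, -, -⟩
  exact hbY (Finset.mem_inter.mp hb).2

lemma not_crossing_union_right (X Y : Finset V) : ¬ crossing (X ∪ Y) Y := by
  rw [crossing_iff]
  rintro ⟨-, -, ⟨d, hdY, hd⟩, -⟩
  exact hd (Finset.mem_union_right _ hdY)

lemma uncross_inter {X Y W : Finset V} (hXY : crossing X Y) (hYW : ¬ crossing Y W)
    (h : crossing (X ∩ Y) W) : crossing X W := by
  rw [crossing_iff] at hXY hYW h ⊢
  obtain ⟨⟨a, ha, haW⟩, ⟨b, hb, hbW⟩, ⟨d, hdW, hd⟩, ⟨e, he, heW⟩⟩ := h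
  rw [Finset.mem_inter] at ha hb
  rw [Finset.mem_inter] at hd he
  push_neg at hd he
  obtain ⟨u, huX, huY⟩ := hXY.2.2.2
  by_cases h3 : ∃ z, z ∈ W ∧ z ∉ X
  · by_cases h4 : ∃ z, z ∉ X ∧ z ∉ W
    · exact ⟨⟨a, ha.1, haW⟩, ⟨b, hb.1, hbW⟩, h3, h4⟩
    · -- X ∪ W = univ
      push_neg at h4
      exfalso
      have heX : e ∈ X := by
        by_contra heX
        exact heW (h4 e heX)
      have heY : e ∉ Y := he heX
      by_cases h5 : ∃ z, z ∈ W ∧ z ∉ Y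
      · by_cases h6 : ∃ z, z ∉ Y ∧ z ∉ W
        · exact hYW ⟨⟨a, ha.2, haW⟩, ⟨b, hb.2, hbW⟩, h5, h6⟩
        · push_neg at h6
          exact heW (h6 e heY)
      · push_neg at h5
        exact huY (h5 u (h4 u huX))
  · -- W ⊆ X
    push_neg at h3
    exfalso
    have hdX : d ∈ X := h3 d hdW
    have hdY : d ∉ Y := hd hdX
    by_cases h5 : ∃ z, z ∈ Y ∧ z ∉ W
    · by_cases h6 : ∃ z, z ∉ Y ∧ z ∉ W
      · exact hYW ⟨⟨a, ha.2, haW⟩, h5, ⟨d, hdW, hdY⟩, h6⟩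
      · push_neg at h6
        exact huX (h3 u (h6 u huY))
    · push_neg at h5
      obtain ⟨y, hyY, hyX⟩ := hXY.2.2.1
      exact hyX (h3 y (h5 y hyY))

lemma uncross_union {X Y W : Finset V} (hXY : crossing X Y) (hYW : ¬ crossing Y W)
    (h : crossing (X ∪ Y) W) : crossing X W := by
  have h1 : crossing (Xᶜ ∩ Yᶜ) W := by
    rw [← Finset.compl_union]
    rwa [crossing_compl_left]
  have h2 : crossing Xᶜ Yᶜ := by
    rw [crossing_compl_left, crossing_compl_right]; exact hXY
  have h3 : ¬ crossing Yᶜ W := by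
    rwa [crossing_compl_left]
  have := uncross_inter h2 h3 h1
  rwa [crossing_compl_left] at this

lemma cutWeight_compl (w : V → V → ℝ) (X : Finset V) : cutWeight w Xᶜ = cutWeight w X := by
  unfold cutWeight
  congr 1
  apply Finset.sum_congr rfl
  intro p _
  apply if_congr _ rfl rfl
  simp only [Finset.mem_compl, not_not]
  tauto

lemma cutWeight_submod (w : V → V → ℝ) (hnn : ∀ i j, 0 ≤ w i j) (X Y : Finset V) :
    cutWeight w (X ∩ Y) + cutWeight w (X ∪ Y) ≤ cutWeight w X + cutWeight w Y := by
  unfold cutWeight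
  rw [← mul_add, ← mul_add, ← Finset.sum_add_distrib, ← Finset.sum_add_distrib]
  have hhalf : (0:ℝ) ≤ 1/2 := by norm_num
  apply mul_le_mul_of_nonneg_left _ hhalf
  apply Finset.sum_le_sum
  intro p _
  have hw := hnn p.1 p.2
  by_cases h1 : p.1 ∈ X <;> by_cases h2 : p.2 ∈ X <;> by_cases h3 : p.1 ∈ Y <;>
    by_cases h4 : p.2 ∈ Y <;>
    simp [Finset.mem_inter, Finset.mem_union, h1, h2, h3, h4] <;> linarith

end Aux

/-- If all cuts of a maximal cross-free family of cuts have the same weight `c`,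
then `c` is the minimum cut weight of the graph. -/
theorem stmt9 {V : Type*} [DecidableEq V] [Fintype V] (hV : 2 ≤ Fintype.card V)
    (w : V → V → ℝ) (hsym : ∀ i j, w i j = w j i) (hnn : ∀ i j, 0 ≤ w i j)
    (L : Finset (Finset V)) (c : ℝ)
    (hshore : ∀ X ∈ L, isCutShore X)
    (hcrossfree : ∀ X ∈ L, ∀ Y ∈ L, ¬ crossing X Y)
    (hmax : ∀ X : Finset V, isCutShore X → X ∉ L → Xᶜ ∉ L → ∃ Y ∈ L, crossing X Y)
    (hweight : ∀ X ∈ L, cutWeight w X = c) :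
    IsLeast {d | ∃ X : Finset V, isCutShore X ∧ cutWeight w X = d} c := by
  classical
  have key : ∀ n : ℕ, ∀ X : Finset V, isCutShore X →
      (L.filter (fun Z => crossing X Z)).card ≤ n → c ≤ cutWeight w X := by
    intro n
    induction n with
    | zero =>
      intro X hX hcard
      by_cases hXL : X ∈ L
      · exact le_of_eq (hweight X hXL).symm
      by_cases hXcL : Xᶜ ∈ L
      · rw [← cutWeight_compl]
        exact le_of_eq (hweight _ hXcL).symm
      obtain ⟨Y, hYL, hcr⟩ := hmax X hX hXL hXcL
      have hmem : Y ∈ L.filter (fun Z => crossing X Z) := Finset.mem_filter.mpr ⟨hYL, hcr⟩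
      have := Finset.card_pos.mpr ⟨Y, hmem⟩
      omega
    | succ n ih =>
      intro X hX hcard
      by_cases hXL : X ∈ L
      · exact le_of_eq (hweight X hXL).symm
      by_cases hXcL : Xᶜ ∈ L
      · rw [← cutWeight_compl]
        exact le_of_eq (hweight _ hXcL).symm
      obtain ⟨Y, hYL, hcr⟩ := hmax X hX hXL hXcL
      have hmem : Y ∈ L.filter (fun Z => crossing X Z) := Finset.mem_filter.mpr ⟨hYL, hcr⟩
      have hpos : 1 ≤ (L.filter (fun Z => crossing X Z)).card := Finset.card_pos.mpr ⟨Y, hmem⟩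
      -- shores
      obtain ⟨u, hu⟩ := hcr.2.2.2
      rw [Finset.mem_inter, Finset.mem_compl, Finset.mem_compl] at hu
      have hsInter : isCutShore (X ∩ Y) := by
        refine ⟨hcr.1, fun heq => ?_⟩
        have : u ∈ X ∩ Y := heq ▸ Finset.mem_univ u
        exact hu.1 (Finset.mem_inter.mp this).1
      have hsUnion : isCutShore (X ∪ Y) := by
        obtain ⟨a, ha⟩ := hcr.1
        refine ⟨⟨a, Finset.mem_union_left _ (Finset.mem_inter.mp ha).1⟩, fun heq => ?_⟩
        have : u ∈ X ∪ Y := heq ▸ Finset.mem_univ u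
        rcases Finset.mem_union.mp this with h | h
        · exact hu.1 h
        · exact hu.2 h
      -- crossing counts decrease
      have hsubI : L.filter (fun Z => crossing (X ∩ Y) Z) ⊆
          (L.filter (fun Z => crossing X Z)).erase Y := by
        intro W hW
        rw [Finset.mem_filter] at hW
        refine Finset.mem_erase.mpr ⟨?_, Finset.mem_filter.mpr ⟨hW.1, ?_⟩⟩
        · intro hWY; rw [hWY] at hW; exact not_crossing_inter_right X Y hW.2
        · exact uncross_inter hcr (hcrossfree Y hYL W hW.1) hW.2
      have hsubU : L.filter (fun Z => crossing (X ∪ Y) Z) ⊆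
          (L.filter (fun Z => crossing X Z)).erase Y := by
        intro W hW
        rw [Finset.mem_filter] at hW
        refine Finset.mem_erase.mpr ⟨?_, Finset.mem_filter.mpr ⟨hW.1, ?_⟩⟩
        · intro hWY; rw [hWY] at hW; exact not_crossing_union_right X Y hW.2
        · exact uncross_union hcr (hcrossfree Y hYL W hW.1) hW.2
      have hcardE : ((L.filter (fun Z => crossing X Z)).erase Y).card =
          (L.filter (fun Z => crossing X Z)).card - 1 := Finset.card_erase_of_mem hmem
      have hcI : (L.filter (fun Z => crossing (X ∩ Y) Z)).card ≤ n := by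
        have := Finset.card_le_card hsubI
        omega
      have hcU : (L.filter (fun Z => crossing (X ∪ Y) Z)).card ≤ n := by
        have := Finset.card_le_card hsubU
        omega
      have h1 := ih (X ∩ Y) hsInter hcI
      have h2 := ih (X ∪ Y) hsUnion hcU
      have hs := cutWeight_submod w hnn X Y
      have hY := hweight Y hYL
      linarith
  constructor
  · -- c is attained
    obtain ⟨v, v', hvv'⟩ := Fintype.exists_pair_of_one_lt_card (by omega : 1 < Fintype.card V)
    have hXs : isCutShore ({v} : Finset V) := by
      refine ⟨⟨v, Finset.mem_singleton_self v⟩, fun heq => ?_⟩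
      have : v' ∈ ({v} : Finset V) := heq ▸ Finset.mem_univ v'
      exact hvv' (Finset.mem_singleton.mp this).symm
    by_cases h1 : ({v} : Finset V) ∈ L
    · exact ⟨{v}, hshore _ h1, hweight _ h1⟩
    by_cases h2 : ({v} : Finset V)ᶜ ∈ L
    · exact ⟨({v} : Finset V)ᶜ, hshore _ h2, hweight _ h2⟩
    obtain ⟨Y, hYL, -⟩ := hmax {v} hXs h1 h2
    exact ⟨Y, hshore Y hYL, hweight Y hYL⟩
  · rintro d ⟨X, hX, rfl⟩
    exact key ((L.filter (fun Z => crossing X Z)).card) X hX le_rfl
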